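/- The number of lattice walks from (0,0) to (x₀, y₀) (with unit up/right steps) that never touch the line y = x + c equals binom(x₀+y₀, x₀) − binom(x₀+y₀, y₀ − c), for integers 0 < c < y₀ < x₀ + c. -/

import Mathlib

open Finset
open scoped symmDiff Classical

private lemma myIvt (g : ℕ → ℤ) (hstep : ∀ j, g (j+1) ≤ g j + 1) (t : ℤ) :
    ∀ n, g 0 ≤ t → t ≤ g n → ∃ j ≤ n, g j = t := by
  intro n
  induction n with
  | zero => intro h0 hn; exact ⟨0, le_rfl, le_antisymm h0 hn⟩
  | succ n ih =>
    intro h0 hn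
    by_cases h : t ≤ g n
    · obtain ⟨j, hj, hje⟩ := ih h0 h
      exact ⟨j, hj.trans (Nat.le_succ n), hje⟩
    · exact ⟨n+1, le_rfl, by have := hstep n; omega⟩

private lemma u_succ_le (F : Finset ℕ) (j : ℕ) :
    (F ∩ range (j+1)).card ≤ (F ∩ range j).card + 1 := by
  have hs : F ∩ range (j+1) ⊆ insert j (F ∩ range j) := by
    intro x hx
    simp only [mem_inter, mem_range] at hx
    simp only [mem_insert, mem_inter, mem_range]
    rcases Nat.lt_succ_iff_lt_or_eq.mp hx.2 with h | h
    · exact Or.inr ⟨hx.1, h⟩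
    · exact Or.inl h
  exact (card_le_card hs).trans (card_insert_le _ _)

private lemma exists_touch (c n : ℕ) (F : Finset ℕ) (hF : F ⊆ range n)
    (hc : n + c ≤ 2 * F.card) :
    ∃ j ≤ n, 2 * (F ∩ range j).card = j + c := by
  have hstep : ∀ j, (fun j => 2 * ((F ∩ range j).card : ℤ) - j) (j+1)
      ≤ (fun j => 2 * ((F ∩ range j).card : ℤ) - j) j + 1 := by
    intro j
    have := u_succ_le F j
    simp only []
    omega
  have h0 : (fun j => 2 * ((F ∩ range j).card : ℤ) - j) 0 ≤ (c : ℤ) := by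
    simp
  have hn : (c : ℤ) ≤ (fun j => 2 * ((F ∩ range j).card : ℤ) - j) n := by
    have : F ∩ range n = F := inter_eq_left.2 hF
    simp only [this]
    omega
  obtain ⟨j, hj, hje⟩ := myIvt _ hstep c n h0 hn
  exact ⟨j, hj, by omega⟩

private lemma refl_prefix (F : Finset ℕ) (j₀ n j : ℕ) (h : j ≤ j₀) :
    (F ∆ Ico j₀ n) ∩ range j = F ∩ range j := by
  ext x
  by_cases hx : x ∈ F <;> simp [Finset.mem_symmDiff, hx] <;> omega

private lemma refl_key (c n j₀ j : ℕ) (F : Finset ℕ)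
    (hj₀ : 2 * (F ∩ range j₀).card = j₀ + c) (hle : j₀ ≤ j) (hjn : j ≤ n) :
    ((F ∆ Ico j₀ n) ∩ range j).card + (F ∩ range j).card = c + j := by
  have hAB : (F ∆ Ico j₀ n) ∩ range j = (F ∩ range j) ∆ (Ico j₀ j) := by
    ext x
    by_cases hx : x ∈ F <;> simp [Finset.mem_symmDiff, hx] <;> omega
  rw [hAB]
  set A := F ∩ range j with hA
  set B := Ico j₀ j with hB
  have hsd : (A ∆ B).card = (A \ B).card + (B \ A).card := by
    rw [symmDiff_def]
    exact card_union_of_disjoint disjoint_sdiff_sdiff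
  have e1 : (A \ B).card + (A ∩ B).card = A.card := card_sdiff_add_card_inter A B
  have e2 : (B \ A).card + (B ∩ A).card = B.card := card_sdiff_add_card_inter B A
  have e3 : (A ∩ B).card = (B ∩ A).card := by rw [inter_comm]
  have e4 : B.card = j - j₀ := Nat.card_Ico j₀ j
  have e5 : (F ∩ range j₀).card + (A ∩ B).card = A.card := by
    have hABF : A ∩ B = F ∩ Ico j₀ j := by
      ext x
      by_cases hx : x ∈ F <;> simp [hA, hB, hx] <;> omega
    rw [hABF]
    rw [← card_union_of_disjoint (by
      simp only [disjoint_left, mem_inter, mem_range, mem_Ico]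
      intro a ha hb
      omega)]
    congr 1
    ext x
    by_cases hx : x ∈ F <;> simp [hA, hx] <;> omega
  omega

private lemma refl_touch_iff (c n j₀ j : ℕ) (F : Finset ℕ)
    (hj₀ : 2 * (F ∩ range j₀).card = j₀ + c) (hjn : j ≤ n) :
    2 * ((F ∆ Ico j₀ n) ∩ range j).card = j + c ↔
      2 * (F ∩ range j).card = j + c := by
  rcases le_total j j₀ with h | h
  · rw [refl_prefix F j₀ n j h]
  · have := refl_key c n j₀ j F hj₀ h hjn; omega

private lemma refl_subset (F : Finset ℕ) (j₀ n : ℕ) (hF : F ⊆ range n) :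
    F ∆ Ico j₀ n ⊆ range n := by
  intro x hx
  rw [Finset.mem_symmDiff] at hx
  rcases hx with ⟨h, _⟩ | ⟨h, _⟩
  · exact hF h
  · exact mem_range.2 (mem_Ico.mp h).2

noncomputable def reflW (c n : ℕ) (F : Finset ℕ) : Finset ℕ :=
  if h : ∃ j, 2 * (F ∩ range j).card = j + c then F ∆ Ico (Nat.find h) n else F

private lemma main_helper (c n : ℕ) (F : Finset ℕ) (hF : F ⊆ range n)
    (hw : ∃ j ≤ n, 2 * (F ∩ range j).card = j + c) :
    ∃ j₀ ≤ n, reflW c n (reflW c n F) = F ∧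
      reflW c n F ⊆ range n ∧ (reflW c n F).card + F.card = c + n ∧
      2 * ((reflW c n F) ∩ range j₀).card = j₀ + c := by
  obtain ⟨w, hwn, hwt⟩ := hw
  have h : ∃ j, 2 * (F ∩ range j).card = j + c := ⟨w, hwt⟩
  set j₀ := Nat.find h with hj₀def
  have hj₀t : 2 * (F ∩ range j₀).card = j₀ + c := Nat.find_spec h
  have hj₀n : j₀ ≤ n := (Nat.find_min' h hwt).trans hwn
  have hr : reflW c n F = F ∆ Ico j₀ n := by rw [reflW, dif_pos h]
  have hrt : 2 * ((reflW c n F) ∩ range j₀).card = j₀ + c := by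
    rw [hr, (refl_touch_iff c n j₀ j₀ F hj₀t hj₀n)]
    exact hj₀t
  have hrsub : reflW c n F ⊆ range n := by
    rw [hr]; exact refl_subset F j₀ n hF
  have h' : ∃ j, 2 * ((reflW c n F) ∩ range j).card = j + c := ⟨j₀, hrt⟩
  have hfind : Nat.find h' = j₀ := by
    have hle : Nat.find h' ≤ j₀ := Nat.find_min' h' hrt
    have hge : j₀ ≤ Nat.find h' := by
      have hsp : 2 * ((reflW c n F) ∩ range (Nat.find h')).card = Nat.find h' + c :=
        Nat.find_spec h'
      generalize hgen : Nat.find h' = j₁ at hsp hle ⊢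
      rw [hr] at hsp
      have hsp' := (refl_touch_iff c n j₀ j₁ F hj₀t (hle.trans hj₀n)).mp hsp
      exact Nat.find_min' h hsp'
    exact le_antisymm hle hge
  have hinv : reflW c n (reflW c n F) = F := by
    rw [reflW, dif_pos h', hfind, hr, symmDiff_symmDiff_cancel_right]
  have hcard : (reflW c n F).card + F.card = c + n := by
    have hk := refl_key c n j₀ n F hj₀t hj₀n le_rfl
    rw [← hr] at hk
    rw [inter_eq_left.2 hrsub, inter_eq_left.2 hF] at hk
    exact hk
  exact ⟨j₀, hj₀n, hinv, hrsub, hcard, hrt⟩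

private lemma bad_card (x₀ y₀ c : ℕ) (h2 : c < y₀) (h3 : y₀ < x₀ + c) :
    (((range (x₀ + y₀)).powersetCard y₀).filter
        (fun F => ∃ j ∈ range (x₀ + y₀ + 1),
          2 * (F ∩ range j).card = j + c)).card
      = ((range (x₀ + y₀)).powersetCard (x₀ + c)).card := by
  set n := x₀ + y₀ with hn
  apply Finset.card_nbij' (reflW c n) (reflW c n)
  · intro F hF
    simp only [mem_coe, mem_filter, mem_powersetCard] at hF
    obtain ⟨⟨hsub, hcard⟩, j, hj, ht⟩ := hF
    rw [mem_range] at hj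
    obtain ⟨j₀, hj₀n, hinv, hrsub, hrcard, hrt⟩ :=
      main_helper c n F hsub ⟨j, by omega, ht⟩
    rw [mem_coe, mem_powersetCard]
    exact ⟨hrsub, by omega⟩
  · intro F hF
    simp only [mem_coe, mem_powersetCard] at hF
    obtain ⟨hsub, hcard⟩ := hF
    have hwit : ∃ j ≤ n, 2 * (F ∩ range j).card = j + c :=
      exists_touch c n F hsub (by omega)
    obtain ⟨j₀, hj₀n, hinv, hrsub, hrcard, hrt⟩ := main_helper c n F hsub hwit
    simp only [mem_coe, mem_filter, mem_powersetCard]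
    exact ⟨⟨hrsub, by omega⟩, j₀, mem_range.2 (by omega), hrt⟩
  · intro F hF
    simp only [mem_coe, mem_filter, mem_powersetCard] at hF
    obtain ⟨⟨hsub, hcard⟩, j, hj, ht⟩ := hF
    rw [mem_range] at hj
    obtain ⟨j₀, hj₀n, hinv, _⟩ := main_helper c n F hsub ⟨j, by omega, ht⟩
    exact hinv
  · intro F hF
    simp only [mem_coe, mem_powersetCard] at hF
    obtain ⟨hsub, hcard⟩ := hF
    have hwit : ∃ j ≤ n, 2 * (F ∩ range j).card = j + c :=
      exists_touch c n F hsub (by omega)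
    obtain ⟨j₀, hj₀n, hinv, _⟩ := main_helper c n F hsub hwit
    exact hinv

/-- The number of lattice walks from `(0,0)` to `(x₀,y₀)` that never touch the
line `y = x + c` equals `C(x₀+y₀, x₀) - C(x₀+y₀, y₀-c)`. -/
theorem stmt3 (x₀ y₀ c : ℕ) (h1 : 0 < c) (h2 : c < y₀) (h3 : y₀ < x₀ + c) :
    (@Finset.filter _
        (fun F => ∀ j ∈ Finset.range (x₀ + y₀ + 1),
          2 * (F ∩ Finset.range j).card ≠ j + c) (fun _ => Finset.decidableDforallFinset)
        ((Finset.range (x₀ + y₀)).powersetCard y₀)).card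
      = (x₀ + y₀).choose x₀ - (x₀ + y₀).choose (y₀ - c) := by
  have hbad := bad_card x₀ y₀ c h2 h3
  rw [card_powersetCard, card_range] at hbad
  have hsplit := Finset.card_filter_add_card_filter_not
    (s := (range (x₀ + y₀)).powersetCard y₀)
    (p := fun F => ∀ j ∈ range (x₀ + y₀ + 1), 2 * (F ∩ range j).card ≠ j + c)
  have hneg : ((range (x₀ + y₀)).powersetCard y₀).filter
      (fun F => ¬ ∀ j ∈ range (x₀ + y₀ + 1), 2 * (F ∩ range j).card ≠ j + c)
      = ((range (x₀ + y₀)).powersetCard y₀).filter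
      (fun F => ∃ j ∈ range (x₀ + y₀ + 1), 2 * (F ∩ range j).card = j + c) := by
    ext F
    simp only [mem_filter, and_congr_right_iff]
    intro _
    constructor
    · intro h; push_neg at h; exact h
    · intro h hall; obtain ⟨j, hj, he⟩ := h; exact hall j hj he
  rw [hneg, hbad, card_powersetCard, card_range] at hsplit
  have hc1 : (x₀ + y₀).choose y₀ = (x₀ + y₀).choose x₀ := by
    have h := Nat.choose_symm (n := x₀ + y₀) (k := x₀) (by omega)
    have e : x₀ + y₀ - x₀ = y₀ := by omega
    rw [e] at h
    exact h
  have hc2 : (x₀ + y₀).choose (x₀ + c) = (x₀ + y₀).choose (y₀ - c) := by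
    have h := Nat.choose_symm (n := x₀ + y₀) (k := x₀ + c) (by omega)
    have e : x₀ + y₀ - (x₀ + c) = y₀ - c := by omega
    rw [e] at h
    exact h.symm
  rw [← hc1, ← hc2, ← hsplit, Nat.add_sub_cancel]
  congr 1
  exact (Finset.filter_congr_decidable _ _ _).symm
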